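/- Let Φ_L be the initialization map of a subsystem initialization (V', τ') of ℂ^{d_L} into ℂ^{d_P} with τ' of full rank, let 𝒩 : M_{d_P}(ℂ) → M_{d_P}(ℂ) be a CPTP map, and fix λ̂ ∈ (0,1). Suppose there exist a subsystem initialization (V'', τ'') of ℂ^{d_L} into ℂ^{d_P}, with τ'' of full rank, such that ℳ_{λ̂}(Φ_L(ρ)) = V''(ρ ⊗ τ'' ⊕ 0)V''* for every density operator ρ on ℂ^{d_L}, where ℳ_{λ̂} = λ̂𝒩 + (1−λ̂)·id, and suppose that the initializations (V', τ') and (V'', τ'') are compatible. Fix any density operator τ_F on ℂ^{d_{F''}} and define the CPTP map Φ_{λ̂}(A) = V'' ( (id ⊗ ℱ)(B₁₁) ⊕ B₂₂ ) V''*, where B₁₁ and B₂₂ are the diagonal blocks of V''* A V'' with respect to the decomposition (ℂ^{d_L} ⊗ ℂ^{d_{F''}}) ⊕ ℂ^{d_{R''}} and ℱ(σ) = tr(σ) τ_F. Then for every density operator ρ on ℂ^{d_L}: Φ_{λ̂}(Φ_L(ρ)) = V''(ρ ⊗ τ_F ⊕ 0)V''* and Φ_{λ̂}(𝒩(Φ_L(ρ)))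 = Φ_{λ̂}(Φ_L(ρ)); that is, Φ_{λ̂} is an encoder into the code given by (V'', τ_F) which tolerates the noise 𝒩. -/

import Mathlib

open Matrix Kronecker
open scoped ComplexOrder

noncomputable section

/-- A density operator: positive semidefinite with trace 1. -/
def IsDensity {n : Type*} [Fintype n] (ρ : Matrix n n ℂ) : Prop :=
  ρ.PosSemidef ∧ ρ.trace = 1

/-- A map between matrix spaces is CPTP if it has a Kraus representation. -/
def IsCPTP {n₁ n₂ : Type*} [Fintype n₁] [Fintype n₂] [DecidableEq n₁] [DecidableEq n₂]
    (Φ : Matrix n₁ n₁ ℂ → Matrix n₂ n₂ ℂ) : Prop :=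
  ∃ (m : ℕ) (K : Fin m → Matrix n₂ n₁ ℂ),
    (∀ A, Φ A = ∑ i, K i * A * (K i)ᴴ) ∧ (∑ i, (K i)ᴴ * K i = 1)

/-- A unitary matrix (between possibly differently indexed spaces). -/
def IsUnitaryMx {m n : Type*} [Fintype m] [Fintype n] [DecidableEq m] [DecidableEq n]
    (V : Matrix m n ℂ) : Prop :=
  Vᴴ * V = 1 ∧ V * Vᴴ = 1

/-- The map `ρ ↦ V (ρ ⊗ τ ⊕ 0) Vᴴ` of a subsystem initialization `(V, τ)`. -/
def initMap {L F R P : Type*} [Fintype L] [Fintype F] [Fintype R] [Fintype P]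
    (V : Matrix P ((L × F) ⊕ R) ℂ) (τ : Matrix F F ℂ) (ρ : Matrix L L ℂ) :
    Matrix P P ℂ :=
  V * (Matrix.fromBlocks (ρ ⊗ₖ τ) 0 0 0 : Matrix ((L × F) ⊕ R) ((L × F) ⊕ R) ℂ) * Vᴴ

/-- The orthogonal projection `Π_V = V (1 ⊗ 1 ⊕ 0) Vᴴ` onto the image of the
tensor summand. -/
def projOf {L F R P : Type*} [Fintype L] [Fintype F] [Fintype R] [Fintype P]
    [DecidableEq L] [DecidableEq F]
    (V : Matrix P ((L × F) ⊕ R) ℂ) : Matrix P P ℂ :=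
  V * (Matrix.fromBlocks 1 0 0 0 : Matrix ((L × F) ⊕ R) ((L × F) ⊕ R) ℂ) * Vᴴ

/-- Compatibility of two subsystem initializations. -/
def Compatible {dL dP dF1 dR1 dF2 dR2 : ℕ}
    (V1 : Matrix (Fin dP) ((Fin dL × Fin dF1) ⊕ Fin dR1) ℂ)
    (τ1 : Matrix (Fin dF1) (Fin dF1) ℂ)
    (V2 : Matrix (Fin dP) ((Fin dL × Fin dF2) ⊕ Fin dR2) ℂ)
    (τ2 : Matrix (Fin dF2) (Fin dF2) ℂ) : Prop :=
  ∃ (t1 : Matrix (Fin dF1) (Fin dF1) ℂ) (t2 : Matrix (Fin dF2) (Fin dF2) ℂ),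
    t1.PosSemidef ∧ t2.PosSemidef ∧
    ∀ ρ : Matrix (Fin dL) (Fin dL) ℂ, IsDensity ρ →
      projOf V1 * initMap V2 τ2 ρ * projOf V1 = initMap V1 t1 ρ ∧
      projOf V2 * initMap V1 τ1 ρ * projOf V2 = initMap V2 t2 ρ

/-- Partial trace over the second tensor factor. -/
def ptrF {L F : Type*} [Fintype L] [Fintype F]
    (B : Matrix (L × F) (L × F) ℂ) : Matrix L L ℂ :=
  Matrix.of fun i i' => ∑ j, B (i, j) (i', j)

set_option linter.unusedSectionVars false
set_option maxHeartbeats 1000000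

section Aux

variable {L F R P : Type*} [Fintype L] [Fintype F] [Fintype R] [Fintype P]
  [DecidableEq L] [DecidableEq F] [DecidableEq R] [DecidableEq P]

lemma kron_conjTranspose (A : Matrix L L ℂ) (B : Matrix F F ℂ) :
    (A ⊗ₖ B)ᴴ = Aᴴ ⊗ₖ Bᴴ := by
  ext ⟨i, j⟩ ⟨i', j'⟩
  simp [Matrix.conjTranspose_apply, Matrix.kroneckerMap_apply, mul_comm]

lemma kron_posSemidef {A : Matrix L L ℂ} {B : Matrix F F ℂ}
    (hA : A.PosSemidef) (hB : B.PosSemidef) : (A ⊗ₖ B).PosSemidef := by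
  exact hA.kronecker hB

lemma fromBlocks_zero_posSemidef {A : Matrix L L ℂ} (hA : A.PosSemidef) :
    (Matrix.fromBlocks A 0 0 (0 : Matrix R R ℂ)).PosSemidef := by
  refine Matrix.PosSemidef.of_dotProduct_mulVec_nonneg ?_ ?_
  · show _ = _
    rw [Matrix.fromBlocks_conjTranspose, hA.1.eq]
    simp
  · intro x
    have hx : (Matrix.fromBlocks A 0 0 (0 : Matrix R R ℂ)) *ᵥ x
        = Sum.elim (A *ᵥ (x ∘ Sum.inl)) 0 := by
      simp [Matrix.fromBlocks_mulVec]
    rw [hx]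
    have : star x ⬝ᵥ Sum.elim (A *ᵥ (x ∘ Sum.inl)) 0
        = star (x ∘ Sum.inl) ⬝ᵥ (A *ᵥ (x ∘ Sum.inl)) := by
      simp [dotProduct, Fintype.sum_sum_type, Function.comp]
    rw [this]
    exact hA.dotProduct_mulVec_nonneg _

lemma psd_sum {ι : Type*} (s : Finset ι) (f : ι → Matrix L L ℂ)
    (h : ∀ i ∈ s, (f i).PosSemidef) : (∑ i ∈ s, f i).PosSemidef := by
  classical
  induction s using Finset.induction with
  | empty => simpa using Matrix.PosSemidef.zero
  | insert _ _ hi ih =>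
    rw [Finset.sum_insert hi]
    exact (h _ (Finset.mem_insert_self _ _)).add
      (ih fun i his => h i (Finset.mem_insert_of_mem his))

lemma matrix_eq_zero_of_mulVec (A : Matrix L L ℂ) (h : ∀ x, A *ᵥ x = 0) : A = 0 := by
  ext i j
  have := congrFun (h (Pi.single j 1)) i
  simpa [Matrix.mulVec_single] using this

lemma psd_smul_add_eq_zero {a b : ℝ} (ha : 0 < a) (hb : 0 < b)
    {A B : Matrix L L ℂ} (hA : A.PosSemidef) (hB : B.PosSemidef)
    (h : (a : ℂ) • A + (b : ℂ) • B = 0) : A = 0 ∧ B = 0 := by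
  have key : ∀ x : L → ℂ, A *ᵥ x = 0 ∧ B *ᵥ x = 0 := by
    intro x
    have h0 : (a : ℂ) * (star x ⬝ᵥ A *ᵥ x) + (b : ℂ) * (star x ⬝ᵥ B *ᵥ x) = 0 := by
      have h1 := congrArg (fun M : Matrix L L ℂ => star x ⬝ᵥ M *ᵥ x) h
      simpa [Matrix.add_mulVec, Matrix.smul_mulVec, dotProduct_add,
        dotProduct_smul, smul_eq_mul] using h1
    have ha' : (0 : ℂ) ≤ (a : ℂ) := by exact_mod_cast ha.le
    have hb' : (0 : ℂ) ≤ (b : ℂ) := by exact_mod_cast hb.le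
    have hq1 := mul_nonneg ha' (hA.dotProduct_mulVec_nonneg x)
    have hq2 := mul_nonneg hb' (hB.dotProduct_mulVec_nonneg x)
    have hz := (add_eq_zero_iff_of_nonneg hq1 hq2).mp h0
    have haz : (a : ℂ) ≠ 0 := by exact_mod_cast ha.ne'
    have hbz : (b : ℂ) ≠ 0 := by exact_mod_cast hb.ne'
    exact ⟨(hA.dotProduct_mulVec_zero_iff x).mp (Or.resolve_left (mul_eq_zero.mp hz.1) haz),
      (hB.dotProduct_mulVec_zero_iff x).mp (Or.resolve_left (mul_eq_zero.mp hz.2) hbz)⟩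
  exact ⟨matrix_eq_zero_of_mulVec _ fun x => (key x).1,
    matrix_eq_zero_of_mulVec _ fun x => (key x).2⟩

lemma conj_initMap (V : Matrix P ((L × F) ⊕ R) ℂ) (hV : Vᴴ * V = 1)
    (τ : Matrix F F ℂ) (ρ : Matrix L L ℂ) :
    Vᴴ * initMap V τ ρ * V = Matrix.fromBlocks (ρ ⊗ₖ τ) 0 0 0 := by
  unfold initMap
  have : Vᴴ * (V * (Matrix.fromBlocks (ρ ⊗ₖ τ) 0 0 0 : Matrix ((L × F) ⊕ R) ((L × F) ⊕ R) ℂ) * Vᴴ) * V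
      = (Vᴴ * V) * ((Matrix.fromBlocks (ρ ⊗ₖ τ) 0 0 0 : Matrix ((L × F) ⊕ R) ((L × F) ⊕ R) ℂ) * (Vᴴ * V)) := by
    simp only [Matrix.mul_assoc]
  rw [this, hV, Matrix.one_mul, Matrix.mul_one]

lemma conj_proj (V : Matrix P ((L × F) ⊕ R) ℂ) (hV : Vᴴ * V = 1) (A : Matrix P P ℂ) :
    Vᴴ * (projOf V * A * projOf V) * V
      = Matrix.fromBlocks (Matrix.toBlocks₁₁ (Vᴴ * A * V)) 0 0 0 := by
  unfold projOf
  have key : Vᴴ * ((V * (Matrix.fromBlocks 1 0 0 0 : Matrix ((L × F) ⊕ R) ((L × F) ⊕ R) ℂ) * Vᴴ) * A * (V * (Matrix.fromBlocks 1 0 0 0 : Matrix ((L × F) ⊕ R) ((L × F) ⊕ R) ℂ) * Vᴴ)) * V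
      = (Vᴴ * V) * ((Matrix.fromBlocks 1 0 0 0 : Matrix ((L × F) ⊕ R) ((L × F) ⊕ R) ℂ) *
          ((Vᴴ * (A * V)) * ((Matrix.fromBlocks 1 0 0 0 : Matrix ((L × F) ⊕ R) ((L × F) ⊕ R) ℂ) * (Vᴴ * V)))) := by
    simp only [Matrix.mul_assoc]
  rw [key, hV, Matrix.one_mul, Matrix.mul_one]
  have hC : Vᴴ * (A * V) = Vᴴ * A * V := by rw [Matrix.mul_assoc]
  rw [hC]
  conv_lhs => rw [← Matrix.fromBlocks_toBlocks (Vᴴ * A * V)]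
  rw [← Matrix.mul_assoc]
  simp [Matrix.fromBlocks_multiply]

lemma ptrF_kron (ρ : Matrix L L ℂ) (t : Matrix F F ℂ) :
    ptrF (ρ ⊗ₖ t) = t.trace • ρ := by
  ext i i'
  simp [ptrF, Matrix.trace, Matrix.diag, Matrix.kroneckerMap_apply, Finset.sum_mul,
    mul_comm, ← Finset.mul_sum]

lemma ptrF_lin (a b : ℂ) (X Y : Matrix (L × F) (L × F) ℂ) :
    ptrF (a • X + b • Y) = a • ptrF X + b • ptrF Y := by
  ext i i'
  simp [ptrF, Finset.mul_sum, Finset.sum_add_distrib]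

lemma toBlocks₁₁_lin (a b : ℂ) (X Y : Matrix ((L × F) ⊕ R) ((L × F) ⊕ R) ℂ) :
    Matrix.toBlocks₁₁ (a • X + b • Y) = a • Matrix.toBlocks₁₁ X + b • Matrix.toBlocks₁₁ Y := rfl

lemma toBlocks₂₂_lin (a b : ℂ) (X Y : Matrix ((L × F) ⊕ R) ((L × F) ⊕ R) ℂ) :
    Matrix.toBlocks₂₂ (a • X + b • Y) = a • Matrix.toBlocks₂₂ X + b • Matrix.toBlocks₂₂ Y := rfl

lemma trace_fromBlocks' (A : Matrix L L ℂ) (B : Matrix L R ℂ) (C : Matrix R L ℂ)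
    (D : Matrix R R ℂ) :
    (Matrix.fromBlocks A B C D).trace = A.trace + D.trace := by
  simp [Matrix.trace, Matrix.diag, Fintype.sum_sum_type, Matrix.fromBlocks]

end Aux

/-- the explicit encoder `Φ_λ̂` built from a compatible faulty
initialization encodes correctly and tolerates the noise `𝒩`. -/
theorem stmt18 (dL dP dF' dR' dF'' dR'' : ℕ)
    (V' : Matrix (Fin dP) ((Fin dL × Fin dF') ⊕ Fin dR') ℂ)
    (hV' : IsUnitaryMx V')
    (τ' : Matrix (Fin dF') (Fin dF') ℂ)
    (hτ' : τ'.PosDef ∧ τ'.trace = 1)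
    (𝒩 : Matrix (Fin dP) (Fin dP) ℂ → Matrix (Fin dP) (Fin dP) ℂ)
    (h𝒩 : IsCPTP 𝒩)
    (lh : ℝ) (hlh : lh ∈ Set.Ioo (0:ℝ) 1)
    (V'' : Matrix (Fin dP) ((Fin dL × Fin dF'') ⊕ Fin dR'') ℂ)
    (hV'' : IsUnitaryMx V'')
    (τ'' : Matrix (Fin dF'') (Fin dF'') ℂ)
    (hτ'' : τ''.PosDef ∧ τ''.trace = 1)
    (hMl : ∀ ρ : Matrix (Fin dL) (Fin dL) ℂ, IsDensity ρ →
      (lh : ℂ) • 𝒩 (initMap V' τ' ρ) + ((1 - lh : ℝ) : ℂ) • initMap V' τ' ρ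
        = initMap V'' τ'' ρ)
    (hcomp : Compatible V' τ' V'' τ'')
    (τF : Matrix (Fin dF'') (Fin dF'') ℂ) (hτF : IsDensity τF) :
    ∀ ρ : Matrix (Fin dL) (Fin dL) ℂ, IsDensity ρ →
      (fun A : Matrix (Fin dP) (Fin dP) ℂ =>
          V'' * Matrix.fromBlocks
            ((ptrF (Matrix.toBlocks₁₁ (V''ᴴ * A * V''))) ⊗ₖ τF) 0 0
            (Matrix.toBlocks₂₂ (V''ᴴ * A * V'')) * V''ᴴ) (initMap V' τ' ρ)
        = initMap V'' τF ρ ∧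
      (fun A : Matrix (Fin dP) (Fin dP) ℂ =>
          V'' * Matrix.fromBlocks
            ((ptrF (Matrix.toBlocks₁₁ (V''ᴴ * A * V''))) ⊗ₖ τF) 0 0
            (Matrix.toBlocks₂₂ (V''ᴴ * A * V'')) * V''ᴴ) (𝒩 (initMap V' τ' ρ))
        = (fun A : Matrix (Fin dP) (Fin dP) ℂ =>
          V'' * Matrix.fromBlocks
            ((ptrF (Matrix.toBlocks₁₁ (V''ᴴ * A * V''))) ⊗ₖ τF) 0 0
            (Matrix.toBlocks₂₂ (V''ᴴ * A * V'')) * V''ᴴ) (initMap V' τ' ρ) := by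
  intro ρ hρ
  obtain ⟨hρP, hρtr⟩ := hρ
  simp only []
  set X := initMap V' τ' ρ with hX
  set C := V''ᴴ * X * V'' with hCdef
  set M := V''ᴴ * 𝒩 X * V'' with hMdef
  -- positive semidefiniteness
  have hXpsd : X.PosSemidef := by
    rw [hX]
    exact (fromBlocks_zero_posSemidef (kron_posSemidef hρP hτ'.1.posSemidef)).mul_mul_conjTranspose_same V'
  have hNXpsd : (𝒩 X).PosSemidef := by
    obtain ⟨m, K, hK, -⟩ := h𝒩
    rw [hK]
    exact psd_sum _ _ fun i _ => hXpsd.mul_mul_conjTranspose_same (K i)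
  have hCpsd : C.PosSemidef := hXpsd.conjTranspose_mul_mul_same V''
  have hMpsd : M.PosSemidef := hNXpsd.conjTranspose_mul_mul_same V''
  -- conjugated key equation
  have hkey : (lh : ℂ) • M + ((1 - lh : ℝ) : ℂ) • C = Matrix.fromBlocks (ρ ⊗ₖ τ'') 0 0 0 := by
    have h1 := hMl ρ ⟨hρP, hρtr⟩
    have h2 := congrArg (fun A => V''ᴴ * A * V'') h1
    simp only [Matrix.mul_add, Matrix.add_mul, Matrix.mul_smul, Matrix.smul_mul] at h2
    rw [conj_initMap V'' hV''.1 τ'' ρ] at h2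
    exact h2
  -- block 22 vanishes
  have h22 : (lh : ℂ) • Matrix.toBlocks₂₂ M + ((1 - lh : ℝ) : ℂ) • Matrix.toBlocks₂₂ C = 0 := by
    have := congrArg Matrix.toBlocks₂₂ hkey
    rwa [toBlocks₂₂_lin, Matrix.toBlocks_fromBlocks₂₂] at this
  have hM22psd : (Matrix.toBlocks₂₂ M).PosSemidef := hMpsd.submatrix Sum.inr
  have hC22psd : (Matrix.toBlocks₂₂ C).PosSemidef := hCpsd.submatrix Sum.inr
  obtain ⟨hM22, hC22⟩ :=
    psd_smul_add_eq_zero hlh.1 (by linarith [hlh.2]) hM22psd hC22psd h22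
  -- compatibility gives the 11 block of C
  obtain ⟨t1, t2, ht1, ht2, hco⟩ := hcomp
  have hco2 := (hco ρ ⟨hρP, hρtr⟩).2
  have hC11 : Matrix.toBlocks₁₁ C = ρ ⊗ₖ t2 := by
    have h3 := congrArg (fun A => V''ᴴ * A * V'') hco2
    rw [conj_proj V'' hV''.1 X, conj_initMap V'' hV''.1 t2 ρ] at h3
    have := congrArg Matrix.toBlocks₁₁ h3
    rwa [Matrix.toBlocks_fromBlocks₁₁, Matrix.toBlocks_fromBlocks₁₁] at this
  -- trace computations
  have htrC : C.trace = 1 := by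
    rw [hCdef, Matrix.trace_mul_cycle, hV''.2, Matrix.one_mul, hX]
    unfold initMap
    rw [Matrix.trace_mul_cycle, hV'.1, Matrix.one_mul,
      trace_fromBlocks', Matrix.trace_kronecker, hρtr, hτ'.2, Matrix.trace_zero]
    ring
  have ht2tr : t2.trace = 1 := by
    have h4 : C.trace = t2.trace := by
      conv_lhs => rw [← Matrix.fromBlocks_toBlocks C]
      rw [trace_fromBlocks', hC11, hC22, Matrix.trace_zero, Matrix.trace_kronecker,
        hρtr, one_mul, add_zero]
    rw [← h4, htrC]
  have hptrC11 : ptrF (Matrix.toBlocks₁₁ C) = ρ := by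
    rw [hC11, ptrF_kron, ht2tr, one_smul]
  -- block 11 of M traces to ρ
  have hlhz : (lh : ℂ) ≠ 0 := by exact_mod_cast hlh.1.ne'
  have hptrM11 : ptrF (Matrix.toBlocks₁₁ M) = ρ := by
    have h5 : (lh : ℂ) • Matrix.toBlocks₁₁ M + ((1 - lh : ℝ) : ℂ) • Matrix.toBlocks₁₁ C
        = ρ ⊗ₖ τ'' := by
      have := congrArg Matrix.toBlocks₁₁ hkey
      rwa [toBlocks₁₁_lin, Matrix.toBlocks_fromBlocks₁₁] at this
    have h6 := congrArg ptrF h5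
    rw [ptrF_lin, ptrF_kron, hptrC11, hτ''.2, one_smul] at h6
    have h7 : (lh : ℂ) • ptrF (Matrix.toBlocks₁₁ M) = (lh : ℂ) • ρ := by
      calc (lh : ℂ) • ptrF (Matrix.toBlocks₁₁ M)
          = ρ - ((1 - lh : ℝ) : ℂ) • ρ := eq_sub_of_add_eq h6
        _ = (1 - ((1 - lh : ℝ) : ℂ)) • ρ := by rw [sub_smul, one_smul]
        _ = (lh : ℂ) • ρ := by congr 1; push_cast; ring
    exact smul_right_injective (Matrix (Fin dL) (Fin dL) ℂ) hlhz h7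
  constructor
  · rw [hptrC11, hC22]
    rfl
  · rw [hptrM11, hM22, hptrC11, hC22]
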